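/- Let μ(dx dy) be the pushforward of the standard Gaussian measure on ℝ under the map x ↦ (x, sin x). Then the only polynomial p ∈ ℝ[x,y] with ∫ |p|² dμ = 0 is the zero polynomial. -/

import Mathlib

open MeasureTheory ProbabilityTheory

/-- The pushforward of the standard Gaussian measure on `ℝ` under `x ↦ (x, sin x)`. -/
noncomputable def sinCurveGaussian : Measure (ℝ × ℝ) :=
  Measure.map (fun x : ℝ => (x, Real.sin x)) (gaussianReal 0 1)

open Real in
lemma aux_pow_le_exp (n : ℕ) {t : ℝ} (ht : 0 ≤ t) : t ^ n ≤ n.factorial * Real.exp t := by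
  have h := Real.sum_le_exp_of_nonneg ht (n + 1)
  have h2 : t ^ n / n.factorial ≤ ∑ i ∈ Finset.range (n + 1), t ^ i / i.factorial := by
    exact Finset.single_le_sum (f := fun i => t ^ i / (i.factorial : ℝ))
      (fun i _ => by positivity) (Finset.self_mem_range_succ n)
  have h3 : t ^ n / n.factorial ≤ Real.exp t := h2.trans h
  have hfac : (0:ℝ) < n.factorial := by exact_mod_cast n.factorial_pos
  rw [div_le_iff₀ hfac] at h3
  linarith [h3]

lemma aux_abs_le_exp (x : ℝ) : |x| ≤ x ^ 2 / 8 + 2 := by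
  nlinarith [sq_nonneg (|x| - 4), sq_abs x, abs_nonneg x]

lemma aux_growth (p : MvPolynomial (Fin 2) ℝ) :
    ∃ M : ℝ, 0 ≤ M ∧ ∀ x : ℝ,
      |MvPolynomial.eval ![x, Real.sin x] p| ≤ M * Real.exp (x ^ 2 / 8) := by
  classical
  refine ⟨∑ m ∈ p.support, |MvPolynomial.coeff m p| * (m 0).factorial * Real.exp 2,
    Finset.sum_nonneg fun m _ => by positivity, fun x => ?_⟩
  rw [MvPolynomial.eval_eq']
  calc |∑ m ∈ p.support, MvPolynomial.coeff m p * ∏ i, ![x, Real.sin x] i ^ m i|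
      ≤ ∑ m ∈ p.support, |MvPolynomial.coeff m p * ∏ i, ![x, Real.sin x] i ^ m i| :=
        Finset.abs_sum_le_sum_abs _ _
    _ ≤ ∑ m ∈ p.support,
        |MvPolynomial.coeff m p| * (m 0).factorial * Real.exp 2 * Real.exp (x ^ 2 / 8) := by
        apply Finset.sum_le_sum
        intro m _
        rw [abs_mul]
        have hprod : |∏ i, ![x, Real.sin x] i ^ m i| = |x| ^ m 0 * |Real.sin x| ^ m 1 := by
          rw [Fin.prod_univ_two]
          simp [abs_mul, abs_pow]
        rw [hprod]
        have h1 : |Real.sin x| ^ m 1 ≤ 1 := by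
          apply pow_le_one₀ (abs_nonneg _)
          exact Real.abs_sin_le_one x
        have h2 : |x| ^ m 0 ≤ (m 0).factorial * Real.exp (x ^ 2 / 8 + 2) := by
          calc |x| ^ m 0 ≤ (m 0).factorial * Real.exp |x| := aux_pow_le_exp _ (abs_nonneg x)
            _ ≤ (m 0).factorial * Real.exp (x ^ 2 / 8 + 2) := by
                apply mul_le_mul_of_nonneg_left (Real.exp_le_exp.2 (aux_abs_le_exp x))
                positivity
        calc |MvPolynomial.coeff m p| * (|x| ^ m 0 * |Real.sin x| ^ m 1)
            ≤ |MvPolynomial.coeff m p| * (|x| ^ m 0 * 1) := by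
              apply mul_le_mul_of_nonneg_left _ (abs_nonneg _)
              exact mul_le_mul_of_nonneg_left h1 (by positivity)
          _ = |MvPolynomial.coeff m p| * |x| ^ m 0 := by ring
          _ ≤ |MvPolynomial.coeff m p| * ((m 0).factorial * Real.exp (x ^ 2 / 8 + 2)) := by
              apply mul_le_mul_of_nonneg_left h2 (abs_nonneg _)
          _ = |MvPolynomial.coeff m p| * (m 0).factorial * Real.exp 2 * Real.exp (x ^ 2 / 8) := by
              rw [Real.exp_add]; ring
    _ = (∑ m ∈ p.support, |MvPolynomial.coeff m p| * (m 0).factorial * Real.exp 2) *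
          Real.exp (x ^ 2 / 8) := by rw [Finset.sum_mul]

open Real in
lemma analytic_step (p : MvPolynomial (Fin 2) ℝ)
    (hp : ∫ z, |MvPolynomial.eval ![z.1, z.2] p| ^ 2 ∂sinCurveGaussian = 0) :
    ∀ x : ℝ, MvPolynomial.eval ![x, Real.sin x] p = 0 := by
  have hv : Continuous fun x : ℝ => (![x, Real.sin x] : Fin 2 → ℝ) := by
    apply continuous_pi; intro i; fin_cases i
    · simpa using continuous_id'
    · simpa using Real.continuous_sin
  have hv2 : Continuous fun z : ℝ × ℝ => (![z.1, z.2] : Fin 2 → ℝ) := by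
    apply continuous_pi; intro i; fin_cases i
    · simpa using continuous_fst
    · simpa using continuous_snd
  have hcont : Continuous fun x : ℝ => MvPolynomial.eval ![x, Real.sin x] p :=
    (MvPolynomial.continuous_eval p).comp hv
  have hcont2 : Continuous fun z : ℝ × ℝ => |MvPolynomial.eval ![z.1, z.2] p| ^ 2 :=
    (((MvPolynomial.continuous_eval p).comp hv2).abs).pow 2
  have hmeas : Measurable fun x : ℝ => (x, Real.sin x) :=
    (continuous_id.prodMk Real.continuous_sin).measurable
  rw [sinCurveGaussian, integral_map hmeas.aemeasurable hcont2.aestronglyMeasurable] at hp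
  simp only at hp
  -- hp : ∫ x, |eval ![x, sin x] p| ^ 2 ∂(gaussianReal 0 1) = 0
  obtain ⟨M, hM0, hMb⟩ := aux_growth p
  have hint : Integrable (fun x => |MvPolynomial.eval ![x, Real.sin x] p| ^ 2)
      (gaussianReal 0 1) := by
    rw [gaussianReal_of_var_ne_zero 0 one_ne_zero,
      integrable_withDensity_iff (measurable_gaussianPDF 0 1)
        (ae_of_all _ fun x => ENNReal.ofReal_lt_top)]
    apply Integrable.mono'
      (g := fun x => (M ^ 2 * (Real.sqrt (2 * π))⁻¹) * Real.exp (-(4⁻¹ : ℝ) * x ^ 2))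
      ((integrable_exp_neg_mul_sq (by norm_num : (0:ℝ) < 4⁻¹)).const_mul _)
    · exact ((hcont.abs.pow 2).measurable.mul
        (measurable_gaussianPDF 0 1).ennreal_toReal).aestronglyMeasurable
    · filter_upwards with x
      have hpdf : (gaussianPDF 0 1 x).toReal =
          (Real.sqrt (2 * π))⁻¹ * Real.exp (-x ^ 2 / 2) := by
        rw [gaussianPDF, ENNReal.toReal_ofReal (gaussianPDFReal_nonneg _ _ _)]
        simp only [gaussianPDFReal]
        norm_num
      rw [Real.norm_eq_abs, abs_of_nonneg (by positivity), hpdf]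
      have h1 : |MvPolynomial.eval ![x, Real.sin x] p| ^ 2 ≤ M ^ 2 * Real.exp (x ^ 2 / 4) := by
        have h2 : |MvPolynomial.eval ![x, Real.sin x] p| ^ 2 ≤
            (M * Real.exp (x ^ 2 / 8)) ^ 2 := pow_le_pow_left₀ (abs_nonneg _) (hMb x) 2
        have h3 : (M * Real.exp (x ^ 2 / 8)) ^ 2 = M ^ 2 * Real.exp (x ^ 2 / 4) := by
          rw [mul_pow, sq (Real.exp _), ← Real.exp_add]
          ring_nf
        linarith [h2, h3.le, h3.ge]
      calc |MvPolynomial.eval ![x, Real.sin x] p| ^ 2 *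
            ((Real.sqrt (2 * π))⁻¹ * Real.exp (-x ^ 2 / 2))
          ≤ M ^ 2 * Real.exp (x ^ 2 / 4) * ((Real.sqrt (2 * π))⁻¹ * Real.exp (-x ^ 2 / 2)) := by
            apply mul_le_mul_of_nonneg_right h1
            positivity
        _ = M ^ 2 * (Real.sqrt (2 * π))⁻¹ * (Real.exp (x ^ 2 / 4) * Real.exp (-x ^ 2 / 2)) := by
            ring
        _ = M ^ 2 * (Real.sqrt (2 * π))⁻¹ * Real.exp (-(4⁻¹ : ℝ) * x ^ 2) := by
            rw [← Real.exp_add]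
            ring_nf
  have hae := (integral_eq_zero_iff_of_nonneg (fun x => by positivity) hint).1 hp
  have haev : (fun x => |MvPolynomial.eval ![x, Real.sin x] p| ^ 2) =ᵐ[volume] 0 :=
    hae.filter_mono (gaussianReal_absolutelyContinuous' 0 one_ne_zero).ae_le
  have heq := (Continuous.ae_eq_iff_eq (μ := volume) (hcont.abs.pow 2) continuous_zero).1 haev
  intro x
  have hx := congrFun heq x
  simp only [Pi.zero_apply] at hx
  have := pow_eq_zero_iff (n := 2) (by norm_num) |>.1 hx
  exact abs_eq_zero.1 this

open Real in
lemma alg_step (p : MvPolynomial (Fin 2) ℝ)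
    (h : ∀ x : ℝ, MvPolynomial.eval ![x, Real.sin x] p = 0) : p = 0 := by
  classical
  set A : MvPolynomial (Fin 2) ℝ →ₐ[ℝ] Polynomial (Polynomial ℝ) :=
    MvPolynomial.aeval ![Polynomial.C Polynomial.X, Polynomial.X] with hA
  have hq : ∀ y x : ℝ,
      Polynomial.eval x (MvPolynomial.aeval ![Polynomial.X, Polynomial.C y] p) =
        MvPolynomial.eval ![x, y] p := by
    intro y x
    have h2 := congrFun (congrArg DFunLike.coe (MvPolynomial.comp_aeval
      (φ := Polynomial.aeval x (R := ℝ)) (f := ![Polynomial.X, Polynomial.C y]))) p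
    simp only [AlgHom.comp_apply] at h2
    rw [Polynomial.coe_aeval_eq_eval] at h2
    rw [h2]
    have h3 : (fun i => Polynomial.eval x (![Polynomial.X, Polynomial.C y] i)) = ![x, y] := by
      funext i; fin_cases i <;> simp
    rw [h3, ← MvPolynomial.coe_aeval_eq_eval]
    rfl
  have hqz : ∀ y ∈ Set.Ioo (-1:ℝ) 1,
      (MvPolynomial.aeval ![Polynomial.X, Polynomial.C y] p : Polynomial ℝ) = 0 := by
    intro y hy
    apply Polynomial.eq_zero_of_infinite_isRoot
    apply Set.infinite_of_injective_forall_mem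
      (f := fun n : ℕ => Real.arcsin y + n * (2 * Real.pi))
    · intro a b hab
      have h2pi : (2 * Real.pi) ≠ 0 := by positivity
      simp only at hab
      have : (a:ℝ) = b := mul_right_cancel₀ h2pi (add_left_cancel hab)
      exact_mod_cast this
    · intro n
      simp only [Set.mem_setOf_eq, Polynomial.IsRoot, hq]
      have hs : Real.sin (Real.arcsin y + n * (2 * Real.pi)) = y := by
        rw [Real.sin_add_nat_mul_two_pi, Real.sin_arcsin hy.1.le hy.2.le]
      have := h (Real.arcsin y + n * (2 * Real.pi))
      rw [hs] at this
      exact this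
  have hAz : A p = 0 := by
    apply Polynomial.eq_zero_of_infinite_isRoot
    have hIoo : (Set.Ioo (-1:ℝ) 1).Infinite := Set.Ioo_infinite (by norm_num)
    have := hIoo.to_subtype
    apply Set.infinite_of_injective_forall_mem
      (f := fun y : Set.Ioo (-1:ℝ) 1 => (Polynomial.C (y:ℝ) : Polynomial ℝ))
    · intro a b hab
      exact Subtype.ext (Polynomial.C_injective hab)
    · rintro ⟨y, hy⟩
      simp only [Set.mem_setOf_eq, Polynomial.IsRoot]
      have h2 := congrFun (congrArg DFunLike.coe (MvPolynomial.comp_aeval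
        (φ := ((Polynomial.aeval (Polynomial.C y) :
          Polynomial (Polynomial ℝ) →ₐ[Polynomial ℝ] Polynomial ℝ).restrictScalars ℝ))
        (f := ![Polynomial.C Polynomial.X, Polynomial.X]))) p
      simp only [AlgHom.comp_apply, AlgHom.coe_restrictScalars'] at h2
      rw [Polynomial.coe_aeval_eq_eval] at h2
      rw [hA, h2]
      have h3 : (fun i => Polynomial.eval (Polynomial.C y)
          (![Polynomial.C Polynomial.X, Polynomial.X] i)) = ![Polynomial.X, Polynomial.C y] := by
        funext i; fin_cases i <;> simp
      rw [h3]
      exact hqz y hy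
  -- left inverse
  set B : Polynomial (Polynomial ℝ) →ₐ[ℝ] MvPolynomial (Fin 2) ℝ :=
    Polynomial.aevalTower (Polynomial.aeval (MvPolynomial.X 0 : MvPolynomial (Fin 2) ℝ))
      (MvPolynomial.X 1) with hB
  have hBA : B.comp A = AlgHom.id ℝ _ := by
    apply MvPolynomial.algHom_ext
    intro i
    fin_cases i <;>
      simp [hA, hB, Polynomial.aevalTower_X, Polynomial.aevalTower_C]
  have : B (A p) = p := by rw [← AlgHom.comp_apply, hBA]; rfl
  rw [hAz, map_zero] at this
  exact this.symm

theorem no_nonzero_null_polynomial_on_sin_curve (p : MvPolynomial (Fin 2) ℝ)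
    (hp : ∫ z, |MvPolynomial.eval ![z.1, z.2] p| ^ 2 ∂sinCurveGaussian = 0) :
    p = 0 :=
  alg_step p (analytic_step p hp)
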